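/- Let A be a finite subset of Euclidean space ℝⁿ and fix β > 0. For all r, k > 0 the Delaunay core bifiltration and the core bifiltration satisfy ACr^β_{r,k}(A) ⊆ Cr^β_{r,k}(A) ⊆ ACr^β_{(2β+1)r, k}(A). -/

import Mathlib

open Metric ENNReal

/-- The `k`-core distance of `x` to a finite set `A`:
`inf { r ≥ 0 : |B(x,r) ∩ A| ≥ ⌈k⌉ }` (valued in `ℝ≥0∞`). -/
noncomputable def coreDist {M : Type*} [MetricSpace M] (A : Finset M) (k : ℝ) (x : M) : ℝ≥0∞ :=
  sInf {r : ℝ≥0∞ | ⌈k⌉ ≤ (((A : Set M) ∩ {y | edist x y ≤ r}).ncard : ℤ)}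

/-- The core dissimilarity `Λ^β_k(a,x) = max { β·Core^A_k(a), d(a,x) }`. -/
noncomputable def lam {M : Type*} [MetricSpace M] (A : Finset M) (β k : ℝ) (a x : M) : ℝ≥0∞ :=
  max (ENNReal.ofReal β * coreDist A k a) (edist a x)

/-- The multicover bifiltration. -/
def Cov {M : Type*} [MetricSpace M] (A : Finset M) (r k : ℝ) : Set M :=
  {x | ⌈k⌉ ≤ (((A : Set M) ∩ Metric.closedBall x r).ncard : ℤ)}

/-- The core bifiltration. -/
def Cr {M : Type*} [MetricSpace M] (A : Finset M) (β r k : ℝ) : Set M :=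
  ⋃ a ∈ A, {x | lam A β k a x ≤ ENNReal.ofReal r}

/-- Voronoi cell of `a ∈ A`. -/
def Vor {n : ℕ} (A : Finset (EuclideanSpace ℝ (Fin n))) (a : EuclideanSpace ℝ (Fin n)) :
    Set (EuclideanSpace ℝ (Fin n)) :=
  {x | ∀ a' ∈ A, dist a x ≤ dist a' x}

/-- The Delaunay core bifiltration. -/
def ACr {n : ℕ} (A : Finset (EuclideanSpace ℝ (Fin n))) (β r k : ℝ) :
    Set (EuclideanSpace ℝ (Fin n)) :=
  ⋃ a ∈ A, ({x | lam A β k a x ≤ ENNReal.ofReal r} ∩ Vor A a)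

lemma coreDist_triangle {M : Type*} [MetricSpace M] (A : Finset M) (k : ℝ) (a b : M) :
    coreDist A k b ≤ coreDist A k a + edist a b := by
  set e := edist a b with he
  have key : ∀ s ∈ {r : ℝ≥0∞ | ⌈k⌉ ≤ (((A : Set M) ∩ {y | edist a y ≤ r}).ncard : ℤ)},
      coreDist A k b ≤ s + e := by
    intro s hs
    apply sInf_le
    simp only [Set.mem_setOf_eq] at hs ⊢
    refine le_trans hs ?_
    have hsub : (A : Set M) ∩ {y | edist a y ≤ s} ⊆ (A : Set M) ∩ {y | edist b y ≤ s + e} := by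
      rintro y ⟨hyA, hy⟩
      refine ⟨hyA, ?_⟩
      calc edist b y ≤ edist b a + edist a y := edist_triangle _ _ _
        _ = edist a y + edist a b := by rw [edist_comm b a, add_comm]
        _ ≤ s + e := add_le_add hy le_rfl
    exact_mod_cast Set.ncard_le_ncard hsub (A.finite_toSet.inter_of_left _)
  have h2 : coreDist A k b - e ≤ coreDist A k a :=
    le_sInf fun s hs => tsub_le_iff_right.mpr (key s hs)
  calc coreDist A k b ≤ (coreDist A k b - e) + e := le_tsub_add
    _ ≤ coreDist A k a + e := add_le_add_left h2 e

theorem stmt8 {n : ℕ} (A : Finset (EuclideanSpace ℝ (Fin n))) (β : ℝ) (hβ : 0 < β)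
    (r k : ℝ) (hr : 0 < r) (hk : 0 < k) :
    ACr A β r k ⊆ Cr A β r k ∧ Cr A β r k ⊆ ACr A β ((2 * β + 1) * r) k := by
  constructor
  · intro x hx
    simp only [ACr, Cr, Set.mem_iUnion] at hx ⊢
    obtain ⟨a, ha, hx, -⟩ := hx
    exact ⟨a, ha, hx⟩
  · intro x hx
    simp only [Cr, Set.mem_iUnion] at hx
    obtain ⟨a, ha, hlam⟩ := hx
    have hA : A.Nonempty := ⟨a, ha⟩
    obtain ⟨b, hb, hbmin⟩ := A.exists_min_image (fun a' => dist a' x) hA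
    have h1 : ENNReal.ofReal β * coreDist A k a ≤ ENNReal.ofReal r :=
      le_trans (le_max_left _ _) hlam
    have h2 : edist a x ≤ ENNReal.ofReal r := le_trans (le_max_right _ _) hlam
    have hbx : edist b x ≤ edist a x := by
      rw [edist_dist, edist_dist]
      exact ENNReal.ofReal_le_ofReal (hbmin a ha)
    have hab : edist a b ≤ ENNReal.ofReal r + ENNReal.ofReal r := by
      calc edist a b ≤ edist a x + edist x b := edist_triangle _ _ _
        _ = edist a x + edist b x := by rw [edist_comm x b]
        _ ≤ ENNReal.ofReal r + ENNReal.ofReal r := add_le_add h2 (hbx.trans h2)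
    have hcore : ENNReal.ofReal β * coreDist A k b ≤
        ENNReal.ofReal ((2 * β + 1) * r) := by
      calc ENNReal.ofReal β * coreDist A k b
          ≤ ENNReal.ofReal β * (coreDist A k a + edist a b) := by
            exact mul_le_mul_right (coreDist_triangle A k a b) _
        _ = ENNReal.ofReal β * coreDist A k a + ENNReal.ofReal β * edist a b := by
            rw [mul_add]
        _ ≤ ENNReal.ofReal r + ENNReal.ofReal β * (ENNReal.ofReal r + ENNReal.ofReal r) :=
            add_le_add h1 (mul_le_mul_right hab _)
        _ = ENNReal.ofReal ((2 * β + 1) * r) := by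
            rw [← ENNReal.ofReal_add hr.le hr.le, ← ENNReal.ofReal_mul hβ.le,
              ← ENNReal.ofReal_add hr.le (by positivity)]
            ring_nf
    simp only [ACr, Set.mem_iUnion]
    refine ⟨b, hb, ?_, ?_⟩
    · have hrr : ENNReal.ofReal r ≤ ENNReal.ofReal ((2 * β + 1) * r) :=
        ENNReal.ofReal_le_ofReal (by nlinarith)
      exact max_le hcore ((hbx.trans h2).trans hrr)
    · intro a' ha'
      exact hbmin a' ha'
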